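/- Let G be a finite simple graph with vertex set V and edge set E, and let s, t ∈ V. Define a simple graph G' whose vertex set consists of two disjoint copies (indexed 0 and 1) of V ∪ E together with one additional vertex w, and whose edges are: for each copy c ∈ {0,1} and each edge e = {u,v} ∈ E, the edges {(u,c),(e,c)} and {(e,c),(v,c)}; together with the three edges {(s,0),(s,1)}, {(t,0),w}, and {(t,1),w}. Then G' is 2-colorable (equivalently, G' contains no closed walk of odd length) if and only if s and t are not connected in G. -/
import Mathlib

open Classical

lemma aux_mem_edge {V : Type} {G : SimpleGraph V} (e : G.edgeSet) {u v : V}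
    (hu : u ∈ (e : Sym2 V)) (hv : v ∈ (e : Sym2 V)) : u = v ∨ G.Adj u v := by
  obtain ⟨e, he⟩ := e
  induction e with
  | h a b =>
    simp only [Sym2.mem_iff] at hu hv
    rw [SimpleGraph.mem_edgeSet] at he
    rcases hu with rfl | rfl <;> rcases hv with rfl | rfl
    · exact Or.inl rfl
    · exact Or.inr he
    · exact Or.inr he.symm
    · exact Or.inl rfl

lemma aux_fin2 : ∀ a b c : Fin 2, a ≠ b → b ≠ c → a = c := by decide

theorem stmt_0 {V : Type} [Fintype V] (G : SimpleGraph V) (s t : V) :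
    (SimpleGraph.fromRel (fun x y : Option ((V ⊕ G.edgeSet) × Bool) =>
      (∃ (u : V) (e : G.edgeSet) (c : Bool),
          u ∈ (e : Sym2 V) ∧ x = some (Sum.inl u, c) ∧ y = some (Sum.inr e, c)) ∨
      (x = some (Sum.inl s, false) ∧ y = some (Sum.inl s, true)) ∨
      (x = some (Sum.inl t, false) ∧ y = none) ∨
      (x = some (Sum.inl t, true) ∧ y = none))).Colorable 2 ↔
      ¬ G.Reachable s t := by
  set rel := (fun x y : Option ((V ⊕ G.edgeSet) × Bool) =>
      (∃ (u : V) (e : G.edgeSet) (c : Bool),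
          u ∈ (e : Sym2 V) ∧ x = some (Sum.inl u, c) ∧ y = some (Sum.inr e, c)) ∨
      (x = some (Sum.inl s, false) ∧ y = some (Sum.inl s, true)) ∨
      (x = some (Sum.inl t, false) ∧ y = none) ∨
      (x = some (Sum.inl t, true) ∧ y = none)) with hrel
  constructor
  · rintro ⟨C⟩ hR
    -- C is constant on copies of connected vertices
    have key : ∀ (c : Bool) (a b : V), G.Reachable a b →
        C (some (Sum.inl a, c)) = C (some (Sum.inl b, c)) := by
      intro c a b ⟨w⟩
      induction w with
      | nil => rfl
      | @cons u v z h p ih =>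
        set e : G.edgeSet := ⟨s(u, v), h⟩ with he
        have hu : u ∈ (e : Sym2 V) := by simp [he]
        have hv : v ∈ (e : Sym2 V) := by simp [he]
        have h1 : (SimpleGraph.fromRel rel).Adj (some (Sum.inl u, c)) (some (Sum.inr e, c)) := by
          rw [SimpleGraph.fromRel_adj]
          exact ⟨by simp, Or.inl (Or.inl ⟨u, e, c, hu, rfl, rfl⟩)⟩
        have h2 : (SimpleGraph.fromRel rel).Adj (some (Sum.inl v, c)) (some (Sum.inr e, c)) := by
          rw [SimpleGraph.fromRel_adj]
          exact ⟨by simp, Or.inl (Or.inl ⟨v, e, c, hv, rfl, rfl⟩)⟩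
        have := aux_fin2 _ _ _ (C.valid h1) (C.valid h2).symm
        exact this.trans ih
    have hs : (SimpleGraph.fromRel rel).Adj (some (Sum.inl s, false)) (some (Sum.inl s, true)) := by
      rw [SimpleGraph.fromRel_adj]
      exact ⟨by simp, Or.inl (Or.inr (Or.inl ⟨rfl, rfl⟩))⟩
    have ht0 : (SimpleGraph.fromRel rel).Adj (some (Sum.inl t, false)) none := by
      rw [SimpleGraph.fromRel_adj]
      exact ⟨by simp, Or.inl (Or.inr (Or.inr (Or.inl ⟨rfl, rfl⟩)))⟩
    have ht1 : (SimpleGraph.fromRel rel).Adj (some (Sum.inl t, true)) none := by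
      rw [SimpleGraph.fromRel_adj]
      exact ⟨by simp, Or.inl (Or.inr (Or.inr (Or.inr ⟨rfl, rfl⟩)))⟩
    have e1 := key false s t hR
    have e2 := key true s t hR
    have e3 := aux_fin2 _ _ _ (C.valid ht0) (C.valid ht1).symm
    exact C.valid hs (e1.trans (e3.trans e2.symm))
  · intro hR
    set f : Option ((V ⊕ G.edgeSet) × Bool) → Fin 2 := fun x => match x with
        | none => 1
        | some (Sum.inl u, c) => if c = true ∧ G.Reachable s u then 1 else 0
        | some (Sum.inr e, c) =>
            if c = true ∧ ∃ v ∈ (e : Sym2 V), G.Reachable s v then 0 else 1 with hf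
    have hne : ∀ x y, rel x y → f x ≠ f y := by
      intro x y h
      rcases h with ⟨u, e, c, hu, rfl, rfl⟩ | ⟨rfl, rfl⟩ | ⟨rfl, rfl⟩ | ⟨rfl, rfl⟩
      · simp only [hf]
        split_ifs with h1 h2 h2
        · exact one_ne_zero
        · exact absurd ⟨h1.1, u, hu, h1.2⟩ h2
        · refine absurd ⟨h2.1, ?_⟩ h1
          obtain ⟨v, hv, hrv⟩ := h2.2
          rcases aux_mem_edge e hu hv with h' | hadj
          · exact h' ▸ hrv
          · exact hrv.trans hadj.symm.reachable
        · exact zero_ne_one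
      · simp [hf, SimpleGraph.Reachable.refl s]
      · simp [hf]
      · simp [hf, hR]
    refine ⟨SimpleGraph.Coloring.mk f ?_⟩
    intro x y hadj
    rw [SimpleGraph.fromRel_adj] at hadj
    rcases hadj.2 with h | h
    · exact hne _ _ h
    · exact (hne _ _ h).symm
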